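/- If C = (1, c₂, c₃, c₄, c₅, c₆) is canonical and the subsystem C' = (1, c₂, c₃, c₄, c₅) is noncanonical, then c₆ equals 2c₅ − c₂, 2c₅ − c₃, or 2c₅ − c₄. -/
import Mathlib


open Finset

/-- `x` is a representation of value `v` in the coin system `c 1, …, c n`. -/
def IsRepr (n : ℕ) (c : ℕ → ℕ) (v : ℕ) (x : ℕ → ℕ) : Prop :=
  ∑ i ∈ Finset.Icc 1 n, c i * x i = v

/-- Minimum number of coins over all representations of `v`. -/
noncomputable def opt (n : ℕ) (c : ℕ → ℕ) (v : ℕ) : ℕ :=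
  sInf {k | ∃ x : ℕ → ℕ, IsRepr n c v x ∧ ∑ i ∈ Finset.Icc 1 n, x i = k}

/-- Number of coins used by the greedy algorithm to pay `v`. -/
def grd (n : ℕ) (c : ℕ → ℕ) (v : ℕ) : ℕ :=
  if hv : v = 0 then 0
  else
    let m := ((Finset.Icc 1 n).filter (fun i => c i ≤ v)).sup c
    if hm : 0 < m then grd n c (v - m) + 1 else 0
termination_by v
decreasing_by omega

/-- The system is canonical: greedy is optimal for every positive value. -/
def Canonical (n : ℕ) (c : ℕ → ℕ) : Prop :=
  ∀ v, 0 < v → opt n c v = grd n c v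

/-- `w` is a counterexample to the system. -/
def IsCex (n : ℕ) (c : ℕ → ℕ) (w : ℕ) : Prop :=
  0 < w ∧ opt n c w < grd n c w

/-- `w` is the minimum counterexample to the system. -/
def MinCex (n : ℕ) (c : ℕ → ℕ) (w : ℕ) : Prop :=
  IsCex n c w ∧ ∀ u, IsCex n c u → w ≤ u

/-- A (currency) system: first coin is `1` and coins strictly increase. -/
def IsSystem (n : ℕ) (c : ℕ → ℕ) : Prop :=
  c 1 = 1 ∧ StrictMonoOn c (Set.Icc 1 n)

lemma opt_le_of_repr {n : ℕ} {c : ℕ → ℕ} {v : ℕ} {x : ℕ → ℕ} (h : IsRepr n c v x) :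
    opt n c v ≤ ∑ i ∈ Finset.Icc 1 n, x i :=
  Nat.sInf_le ⟨x, h, rfl⟩

lemma one_repr {n : ℕ} (c : ℕ → ℕ) (v : ℕ) (hn : 1 ≤ n) (h1 : c 1 = 1) :
    IsRepr n c v (fun i => if i = 1 then v else 0) := by
  unfold IsRepr
  rw [Finset.sum_eq_single 1]
  · simp [h1]
  · intro b _ hb; simp [hb]
  · intro h; exact absurd (Finset.mem_Icc.mpr ⟨le_refl 1, hn⟩) h

lemma reprSet_nonempty {n : ℕ} {c : ℕ → ℕ} (v : ℕ) (hn : 1 ≤ n) (h1 : c 1 = 1) :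
    {k | ∃ x : ℕ → ℕ, IsRepr n c v x ∧ ∑ i ∈ Finset.Icc 1 n, x i = k}.Nonempty :=
  ⟨_, _, one_repr c v hn h1, rfl⟩

lemma exists_opt_repr {n : ℕ} {c : ℕ → ℕ} (v : ℕ) (hn : 1 ≤ n) (h1 : c 1 = 1) :
    ∃ x : ℕ → ℕ, IsRepr n c v x ∧ ∑ i ∈ Finset.Icc 1 n, x i = opt n c v :=
  Nat.sInf_mem (reprSet_nonempty v hn h1)

lemma opt_zero (n : ℕ) (c : ℕ → ℕ) : opt n c 0 = 0 :=
  Nat.le_zero.mp (Nat.sInf_le ⟨fun _ => 0, by simp [IsRepr], by simp⟩)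

lemma grd_zero (n : ℕ) (c : ℕ → ℕ) : grd n c 0 = 0 := by
  rw [grd]; simp

lemma grd_step {n : ℕ} {c : ℕ → ℕ} {v : ℕ} (hv : v ≠ 0)
    (hm : 0 < ((Finset.Icc 1 n).filter (fun i => c i ≤ v)).sup c) :
    grd n c v = grd n c (v - ((Finset.Icc 1 n).filter (fun i => c i ≤ v)).sup c) + 1 := by
  conv_lhs => rw [grd]
  simp [hv, hm]

lemma repr_add_coin {n : ℕ} {c : ℕ → ℕ} {j v : ℕ} {x : ℕ → ℕ} (hx : IsRepr n c v x)
    (hj : j ∈ Finset.Icc 1 n) :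
    IsRepr n c (v + c j) (fun i => x i + if i = j then 1 else 0) ∧
    ∑ i ∈ Finset.Icc 1 n, (x i + if i = j then 1 else 0)
      = (∑ i ∈ Finset.Icc 1 n, x i) + 1 := by
  constructor
  · unfold IsRepr at *
    have : ∑ i ∈ Finset.Icc 1 n, c i * (x i + if i = j then 1 else 0)
        = (∑ i ∈ Finset.Icc 1 n, c i * x i) + ∑ i ∈ Finset.Icc 1 n, (if i = j then c i else 0) := by
      rw [← Finset.sum_add_distrib]
      congr 1; ext i; by_cases h : i = j <;> simp [h, Nat.mul_add]
    rw [this, hx, Finset.sum_ite_eq' _ j, if_pos hj]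
  · rw [Finset.sum_add_distrib, Finset.sum_ite_eq' _ j, if_pos hj]

lemma opt_add_coin {n : ℕ} {c : ℕ → ℕ} {j v : ℕ} (hn : 1 ≤ n) (h1 : c 1 = 1)
    (hj : j ∈ Finset.Icc 1 n) : opt n c (v + c j) ≤ opt n c v + 1 := by
  obtain ⟨x, hx, hxs⟩ := exists_opt_repr v hn h1 (c := c)
  obtain ⟨hr, hcnt⟩ := repr_add_coin hx hj
  have := opt_le_of_repr hr
  omega

lemma opt_sub_coin {n : ℕ} {c : ℕ → ℕ} {j v : ℕ} {x : ℕ → ℕ} (hx : IsRepr n c v x)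
    (hj : j ∈ Finset.Icc 1 n) (hxj : 1 ≤ x j) :
    c j ≤ v ∧ opt n c (v - c j) + 1 ≤ ∑ i ∈ Finset.Icc 1 n, x i := by
  set y : ℕ → ℕ := fun i => if i = j then x i - 1 else x i with hy
  unfold IsRepr at hx
  have hsplit : ∀ f : ℕ → ℕ, ∑ i ∈ Finset.Icc 1 n, f i
      = f j + ∑ i ∈ (Finset.Icc 1 n).erase j, f i := fun f =>
    (Finset.add_sum_erase _ f hj).symm
  have hye : ∀ i ∈ (Finset.Icc 1 n).erase j, c i * y i = c i * x i := by
    intro i hi; simp [hy, Finset.ne_of_mem_erase hi]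
  have hye2 : ∀ i ∈ (Finset.Icc 1 n).erase j, y i = x i := by
    intro i hi; simp [hy, Finset.ne_of_mem_erase hi]
  have hcj : c j ≤ v := by
    rw [← hx, hsplit (fun i => c i * x i)]
    calc c j = c j * 1 := (Nat.mul_one _).symm
      _ ≤ c j * x j := Nat.mul_le_mul_left _ hxj
      _ ≤ _ := Nat.le_add_right _ _
  have hval : (∑ i ∈ Finset.Icc 1 n, c i * y i) + c j = v := by
    have hsum1 : ∑ i ∈ (Finset.Icc 1 n).erase j, c i * y i = ∑ i ∈ (Finset.Icc 1 n).erase j, c i * x i :=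
      Finset.sum_congr rfl hye
    rw [hsplit (fun i => c i * y i), hsum1, ← hx, hsplit (fun i => c i * x i)]
    have : c j * y j + c j = c j * x j := by
      obtain ⟨k, hk⟩ : ∃ k, x j = k + 1 := ⟨x j - 1, by omega⟩
      simp [hy, hk, Nat.mul_succ]
    omega
  have hrepr : IsRepr n c (v - c j) y := by
    unfold IsRepr; omega
  have hcount : (∑ i ∈ Finset.Icc 1 n, y i) + 1 = ∑ i ∈ Finset.Icc 1 n, x i := by
    have hsum2 : ∑ i ∈ (Finset.Icc 1 n).erase j, y i = ∑ i ∈ (Finset.Icc 1 n).erase j, x i :=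
      Finset.sum_congr rfl hye2
    rw [hsplit y, hsplit x, hsum2]
    have : y j + 1 = x j := by simp only [hy, if_pos rfl]; omega
    omega
  exact ⟨hcj, by have := opt_le_of_repr hrepr; omega⟩

lemma sup_coins_eq {n : ℕ} {c : ℕ → ℕ} {j v : ℕ} (hj : j ∈ Finset.Icc 1 n)
    (hjv : c j ≤ v) (hmax : ∀ i ∈ Finset.Icc 1 n, c i ≤ c j) :
    ((Finset.Icc 1 n).filter (fun i => c i ≤ v)).sup c = c j := by
  apply le_antisymm
  · exact Finset.sup_le fun i hi => hmax i (Finset.mem_filter.mp hi).1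
  · exact Finset.le_sup (Finset.mem_filter.mpr ⟨hj, hjv⟩)

lemma grd_top {n : ℕ} {c : ℕ → ℕ} {j v : ℕ} (hj : j ∈ Finset.Icc 1 n)
    (hjv : c j ≤ v) (hj0 : 0 < c j) (hmax : ∀ i ∈ Finset.Icc 1 n, c i ≤ c j) :
    grd n c v = grd n c (v - c j) + 1 := by
  have hs := sup_coins_eq hj hjv hmax
  have hv : v ≠ 0 := by omega
  rw [grd_step hv (hs ▸ hj0), hs]

lemma grd_pos {n : ℕ} {c : ℕ → ℕ} {v : ℕ} (hn : 1 ≤ n) (h1 : c 1 = 1) (hv : 0 < v) :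
    0 < grd n c v := by
  have h1m : c 1 ≤ ((Finset.Icc 1 n).filter (fun i => c i ≤ v)).sup c :=
    Finset.le_sup (Finset.mem_filter.mpr ⟨Finset.mem_Icc.mpr ⟨le_refl 1, hn⟩, by omega⟩)
  rw [grd_step (by omega : v ≠ 0) (by omega)]
  omega

lemma opt_le_grd {n : ℕ} {c : ℕ → ℕ} (hn : 1 ≤ n) (h1 : c 1 = 1) :
    ∀ v, opt n c v ≤ grd n c v := by
  intro v
  induction v using Nat.strong_induction_on with
  | _ v ih =>
    rcases Nat.eq_zero_or_pos v with rfl | hv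
    · rw [opt_zero, grd_zero]
    · set m := ((Finset.Icc 1 n).filter (fun i => c i ≤ v)).sup c with hm
      have h1mem : (1 : ℕ) ∈ (Finset.Icc 1 n).filter (fun i => c i ≤ v) :=
        Finset.mem_filter.mpr ⟨Finset.mem_Icc.mpr ⟨le_refl 1, hn⟩, by omega⟩
      have hm1 : c 1 ≤ m := Finset.le_sup h1mem
      have hmpos : 0 < m := by omega
      obtain ⟨j, hjmem, hjm⟩ := Finset.exists_mem_eq_sup _ ⟨1, h1mem⟩ c
      have hjI : j ∈ Finset.Icc 1 n := (Finset.mem_filter.mp hjmem).1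
      have hjv : c j ≤ v := (Finset.mem_filter.mp hjmem).2
      have hgeq : grd n c v = grd n c (v - m) + 1 := grd_step (by omega) hmpos
      have hoeq : opt n c v ≤ opt n c (v - c j) + 1 := by
        have := opt_add_coin hn h1 hjI (v := v - c j)
        rwa [Nat.sub_add_cancel hjv] at this
      have hmj : m = c j := hjm
      rw [hmj] at hgeq
      have := ih (v - c j) (by omega)
      omega

lemma icc16 : Finset.Icc 1 6 = insert 6 (Finset.Icc 1 5) := by
  ext i; simp [Finset.mem_Icc]; omega

lemma not6 : 6 ∉ Finset.Icc 1 5 := by simp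

lemma grd_agree (c : ℕ → ℕ) : ∀ v, v < c 6 → grd 6 c v = grd 5 c v := by
  intro v
  induction v using Nat.strong_induction_on with
  | _ v ih =>
    intro hv
    rcases Nat.eq_zero_or_pos v with rfl | hvpos
    · rw [grd_zero, grd_zero]
    · have hfe : (Finset.Icc 1 6).filter (fun i => c i ≤ v)
          = (Finset.Icc 1 5).filter (fun i => c i ≤ v) := by
        ext i
        simp only [Finset.mem_filter, Finset.mem_Icc]
        constructor
        · rintro ⟨⟨ha, hb⟩, hc⟩
          have : i ≠ 6 := fun h => by subst h; omega
          exact ⟨⟨ha, by omega⟩, hc⟩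
        · rintro ⟨⟨ha, hb⟩, hc⟩
          exact ⟨⟨ha, by omega⟩, hc⟩
      rw [grd, grd]
      simp only [dif_neg (by omega : v ≠ 0), hfe]
      split_ifs with hm
      · rw [ih (v - (Finset.filter (fun i => c i ≤ v) (Finset.Icc 1 5)).sup c) (by omega)
          (by omega)]
      · rfl

lemma opt_agree (c : ℕ → ℕ) (v : ℕ) (hv : v < c 6) : opt 6 c v = opt 5 c v := by
  unfold opt
  congr 1
  ext k
  simp only [Set.mem_setOf_eq]
  constructor
  · rintro ⟨x, hx, rfl⟩
    unfold IsRepr at hx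
    rw [icc16, Finset.sum_insert not6] at hx
    have hx6 : x 6 = 0 := by
      rcases Nat.eq_zero_or_pos (x 6) with h | h
      · exact h
      · have h2 : c 6 ≤ c 6 * x 6 := le_mul_of_one_le_right (Nat.zero_le _) h
        omega
    rw [hx6, Nat.mul_zero, Nat.zero_add] at hx
    refine ⟨x, hx, ?_⟩
    · rw [icc16, Finset.sum_insert not6, hx6, Nat.zero_add]
  · rintro ⟨x, hx, rfl⟩
    unfold IsRepr at hx
    refine ⟨fun i => if i = 6 then 0 else x i, ?_, ?_⟩
    · unfold IsRepr
      rw [icc16, Finset.sum_insert not6]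
      norm_num
      rw [← hx]
      exact Finset.sum_congr rfl fun i hi => by
        have : i ≠ 6 := by have := Finset.mem_Icc.mp hi; omega
        simp [this]
    · rw [icc16, Finset.sum_insert not6]
      norm_num
      exact Finset.sum_congr rfl fun i hi => by
        have : i ≠ 6 := by have := Finset.mem_Icc.mp hi; omega
        simp [this]

theorem c6_candidates (c : ℕ → ℕ) (hsys : IsSystem 6 c)
    (hC : Canonical 6 c) (hC' : ¬ Canonical 5 c) :
    c 6 = 2 * c 5 - c 2 ∨ c 6 = 2 * c 5 - c 3 ∨ c 6 = 2 * c 5 - c 4 := by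
  obtain ⟨h1, hmono⟩ := hsys
  have hlt : ∀ i j, 1 ≤ i → i < j → j ≤ 6 → c i < c j := fun i j hi hij hj =>
    hmono (Set.mem_Icc.mpr ⟨hi, by omega⟩) (Set.mem_Icc.mpr ⟨by omega, hj⟩) hij
  have hpos : ∀ j, 1 ≤ j → j ≤ 6 → 1 ≤ c j := by
    intro j hj1 hj6
    rcases Nat.eq_or_lt_of_le hj1 with h | h
    · rw [← h, h1]
    · have := hlt 1 j le_rfl h hj6; omega
  have hc45 : c 4 < c 5 := hlt 4 5 (by norm_num) (by norm_num) (by norm_num)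
  have hc56 : c 5 < c 6 := hlt 5 6 (by norm_num) (by norm_num) (by norm_num)
  have hc5pos : 1 ≤ c 5 := hpos 5 (by norm_num) (by norm_num)
  have hle5 : ∀ v, opt 5 c v ≤ grd 5 c v := opt_le_grd (by norm_num) h1
  have mem5 : (5:ℕ) ∈ Finset.Icc 1 5 := Finset.mem_Icc.mpr ⟨by norm_num, le_rfl⟩
  have mem6 : (6:ℕ) ∈ Finset.Icc 1 6 := Finset.mem_Icc.mpr ⟨by norm_num, le_rfl⟩
  -- minimal counterexample of the 5-system
  rw [Canonical] at hC'
  push_neg at hC'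
  obtain ⟨v₀, hv₀, hne₀⟩ := hC'
  have hS : {u | IsCex 5 c u}.Nonempty := ⟨v₀, hv₀, lt_of_le_of_ne (hle5 v₀) hne₀⟩
  set w := sInf {u | IsCex 5 c u} with hwdef
  have hwS : IsCex 5 c w := Nat.sInf_mem hS
  have hw0 : 0 < w := hwS.1
  have hwlt : opt 5 c w < grd 5 c w := hwS.2
  have hwmin : ∀ u, u < w → opt 5 c u = grd 5 c u := by
    intro u hu
    rcases Nat.eq_zero_or_pos u with rfl | hu0
    · rw [opt_zero, grd_zero]
    · by_contra hne
      have hcx : IsCex 5 c u := ⟨hu0, lt_of_le_of_ne (hle5 u) hne⟩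
      have hwle : w ≤ u := Nat.sInf_le hcx
      omega
  -- w ≥ c 6
  have hwc6 : c 6 ≤ w := by
    by_contra h
    push_neg at h
    have heq := hC w hw0
    rw [opt_agree c w h, grd_agree c w h] at heq
    omega
  -- greedy step for the 5-system at values ≥ c 5
  have hg5 : ∀ v, c 5 ≤ v → grd 5 c v = grd 5 c (v - c 5) + 1 := by
    intro v hv
    refine grd_top mem5 hv (by omega) ?_
    intro i hi
    have hi' := Finset.mem_Icc.mp hi
    rcases Nat.eq_or_lt_of_le hi'.2 with h | h
    · rw [h]
    · exact (hlt i 5 hi'.1 h (by norm_num)).le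
  -- no optimal representation of w uses coin 5
  have hno5 : ∀ x, IsRepr 5 c w x → (∑ i ∈ Finset.Icc 1 5, x i) = opt 5 c w → x 5 = 0 := by
    intro x hx hxs
    by_contra h
    have hx5 : 1 ≤ x 5 := by omega
    obtain ⟨hc5w, hsub⟩ := opt_sub_coin hx mem5 hx5
    have hteq : opt 5 c (w - c 5) = grd 5 c (w - c 5) := hwmin _ (by omega)
    have hadd : opt 5 c w ≤ opt 5 c (w - c 5) + 1 := by
      have := opt_add_coin (n := 5) (by norm_num) h1 mem5 (v := w - c 5)
      rwa [Nat.sub_add_cancel hc5w] at this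
    have hgw := hg5 w (by omega)
    omega
  -- upper bound on w
  have hub : w < c 4 + c 5 := by
    by_contra h
    push_neg at h
    obtain ⟨x, hx, hxs⟩ := exists_opt_repr (n := 5) w (by norm_num) h1
    have hx5 : x 5 = 0 := hno5 x hx hxs
    have hex : ∃ j, j ∈ Finset.Icc 1 5 ∧ 1 ≤ x j := by
      by_contra he
      push_neg at he
      have hz : ∑ i ∈ Finset.Icc 1 5, c i * x i = 0 :=
        Finset.sum_eq_zero fun i hi => by
          have h0 : x i = 0 := by have := he i hi; omega
          simp [h0]
      unfold IsRepr at hx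
      omega
    obtain ⟨j, hjmem, hxj⟩ := hex
    have hj15 := Finset.mem_Icc.mp hjmem
    have hj4 : j ≤ 4 := by
      rcases Nat.eq_or_lt_of_le hj15.2 with h' | h'
      · exfalso; rw [h'] at hxj; omega
      · omega
    have hcj4 : c j ≤ c 4 := by
      rcases Nat.eq_or_lt_of_le hj4 with h' | h'
      · rw [h']
      · exact (hlt j 4 hj15.1 h' (by norm_num)).le
    have hcj1 : 1 ≤ c j := hpos j hj15.1 (by omega)
    obtain ⟨hcjw, hsub⟩ := opt_sub_coin hx hjmem hxj
    have hc5t : c 5 ≤ w - c j := by omega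
    have hteq : opt 5 c (w - c j) = grd 5 c (w - c j) := hwmin _ (by omega)
    have hadd : opt 5 c w ≤ opt 5 c (w - c j) + 1 := by
      have := opt_add_coin (n := 5) (by norm_num) h1 hjmem (v := w - c j)
      rwa [Nat.sub_add_cancel hcjw] at this
    have hgt := hg5 (w - c j) hc5t
    have ht2 : opt 5 c (w - c j - c 5) = grd 5 c (w - c j - c 5) := hwmin _ (by omega)
    have hkey : opt 5 c w = opt 5 c (w - c j - c 5) + 2 := by omega
    obtain ⟨z, hz, hzs⟩ := exists_opt_repr (n := 5) (w - c j - c 5) (by norm_num) h1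
    obtain ⟨hz1, hz1s⟩ := repr_add_coin hz mem5
    rw [Nat.sub_add_cancel hc5t] at hz1
    obtain ⟨hz2, hz2s⟩ := repr_add_coin hz1 hjmem
    rw [Nat.sub_add_cancel hcjw] at hz2
    have hcount : ∑ i ∈ Finset.Icc 1 5,
        ((z i + if i = 5 then 1 else 0) + if i = j then 1 else 0) = opt 5 c w := by
      rw [hz2s, hz1s, hzs]; omega
    have hz5 := hno5 _ hz2 hcount
    simp only [if_pos rfl] at hz5
    split_ifs at hz5
  -- the final computation at 2 * c 5
  have hrepr2 : IsRepr 6 c (2 * c 5) (fun i => if i = 5 then 2 else 0) := by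
    unfold IsRepr
    rw [Finset.sum_eq_single 5]
    · simp [Nat.mul_comm]
    · intro b _ hb; simp [hb]
    · intro hn5; exact absurd (Finset.mem_Icc.mpr ⟨by norm_num, by norm_num⟩) hn5
  have hopt2 : opt 6 c (2 * c 5) ≤ 2 := by
    have h := opt_le_of_repr hrepr2
    have hcnt : ∑ i ∈ Finset.Icc 1 6, (if i = 5 then 2 else 0) = 2 := by
      rw [Finset.sum_ite_eq' (Finset.Icc 1 6) 5 (fun _ => 2)]
      simp
    omega
  have hgrd2 : grd 6 c (2 * c 5) = opt 6 c (2 * c 5) := (hC _ (by omega)).symm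
  have hmax6 : ∀ i ∈ Finset.Icc 1 6, c i ≤ c 6 := by
    intro i hi
    have hi' := Finset.mem_Icc.mp hi
    rcases Nat.eq_or_lt_of_le hi'.2 with h' | h'
    · rw [h']
    · exact (hlt i 6 hi'.1 h' le_rfl).le
  have hgstep : grd 6 c (2 * c 5) = grd 6 c (2 * c 5 - c 6) + 1 :=
    grd_top mem6 (by omega) (by omega) hmax6
  have hr0 : 0 < 2 * c 5 - c 6 := by omega
  have hgr1 : grd 6 c (2 * c 5 - c 6) = 1 := by
    have := grd_pos (n := 6) (by norm_num) h1 hr0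
    omega
  have h1mem : (1:ℕ) ∈ (Finset.Icc 1 6).filter (fun i => c i ≤ 2 * c 5 - c 6) :=
    Finset.mem_filter.mpr ⟨Finset.mem_Icc.mpr ⟨le_rfl, by norm_num⟩, by rw [h1]; omega⟩
  obtain ⟨j, hjmem, hjm⟩ := Finset.exists_mem_eq_sup _ ⟨1, h1mem⟩ c
  have hjf := Finset.mem_filter.mp hjmem
  have hj16 := Finset.mem_Icc.mp hjf.1
  have hmler : ((Finset.Icc 1 6).filter (fun i => c i ≤ 2 * c 5 - c 6)).sup c ≤ 2 * c 5 - c 6 :=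
    Finset.sup_le fun i hi => (Finset.mem_filter.mp hi).2
  have hsup_pos : 0 < ((Finset.Icc 1 6).filter (fun i => c i ≤ 2 * c 5 - c 6)).sup c := by
    have := Finset.le_sup (f := c) h1mem
    rw [h1] at this
    omega
  have hstep2 := grd_step (n := 6) (c := c) (by omega : 2 * c 5 - c 6 ≠ 0) hsup_pos
  have hz0 : grd 6 c (2 * c 5 - c 6 -
      ((Finset.Icc 1 6).filter (fun i => c i ≤ 2 * c 5 - c 6)).sup c) = 0 := by omega
  have hrs : 2 * c 5 - c 6 = ((Finset.Icc 1 6).filter (fun i => c i ≤ 2 * c 5 - c 6)).sup c := by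
    by_contra h'
    have hpos' := grd_pos (n := 6) (by norm_num) h1
      (v := 2 * c 5 - c 6 - ((Finset.Icc 1 6).filter (fun i => c i ≤ 2 * c 5 - c 6)).sup c)
      (by omega)
    omega
  have hrcj : 2 * c 5 - c 6 = c j := by rw [hrs, hjm]
  have hcjlt5 : c j < c 5 := by omega
  have hjle4 : j ≤ 4 := by
    by_contra h'
    push_neg at h'
    have : c 5 ≤ c j := by
      rcases Nat.eq_or_lt_of_le h' with h'' | h''
      · rw [← h'']
      · have : j = 6 := by omega
        rw [this]; omega
    omega
  have hj2 : 2 ≤ j := by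
    by_contra h'
    have hj1 : j = 1 := by omega
    rw [hj1, h1] at hrcj
    omega
  interval_cases j
  · left; omega
  · right; left; omega
  · right; right; omega
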